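/- For every n odd and 1 ≤ i < ⌊n/2⌋, it holds that D(i+1)^n = D(i)^n - (n - (2i+1)), and hence D(i+1)^n < D(i)^n. -/

import Mathlib

/-- `D^m = Σ_{k=1}^{m-1} min{2k, 2(m-k)}` would equal `⌊m²/2⌋`; here defined as `⌊m²/2⌋`. -/
def Dm (m : ℕ) : ℕ := m ^ 2 / 2

/-- `D^n`, the maximum full flag distance: `Σ_{k=1}^{n-1} min{2k, 2(n-k)}`. -/
def Dfull (n : ℕ) : ℕ := ∑ k ∈ Finset.Icc 1 (n - 1), min (2 * k) (2 * (n - k))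

/-- The `j`-th component `D(i)^n_j = min{2j, 2(n-j), 2|i-j|}`. -/
def Dc (n i j : ℕ) : ℕ :=
  min (2 * j) (min (2 * (n - j)) (2 * ((i : ℤ) - (j : ℤ)).natAbs))

/-- `D(i)^n = Σ_{j=1}^{n-1} min{2j, 2(n-j), 2|i-j|}`. -/
def Di (n i : ℕ) : ℕ := ∑ j ∈ Finset.Icc 1 (n - 1), Dc n i j

/-- Gauss-type sum: `4 · Σ_{k=0}^{m-1} min(1+k, m-1-k) = m² - (m mod 2)`. -/
lemma sumMin (m : ℕ) :
    4 * ∑ k ∈ Finset.range m, min (1 + k) (m - 1 - k) = m * m - m % 2 := by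
  have h2 : m / 2 ≤ m := Nat.div_le_self _ _
  rw [Finset.range_eq_Ico, ← Finset.sum_Ico_consecutive _ (Nat.zero_le (m/2)) h2]
  have ha : ∑ k ∈ Finset.Ico 0 (m/2), min (1+k) (m-1-k)
      = (m/2) + ∑ k ∈ Finset.range (m/2), k := by
    rw [← Finset.range_eq_Ico]
    rw [show (∑ k ∈ Finset.range (m/2), min (1+k) (m-1-k))
        = ∑ k ∈ Finset.range (m/2), (1+k) from
      Finset.sum_congr rfl (fun k hk => by simp only [Finset.mem_range] at hk; omega)]
    rw [Finset.sum_add_distrib, Finset.sum_const, Finset.card_range, smul_eq_mul, mul_one]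
  have hb : ∑ k ∈ Finset.Ico (m/2) m, min (1+k) (m-1-k)
      = ∑ k ∈ Finset.range (m - m/2), k := by
    rw [Finset.sum_Ico_eq_sum_range]
    rw [show (∑ k ∈ Finset.range (m - m/2), min (1+(m/2+k)) (m-1-(m/2+k)))
        = ∑ k ∈ Finset.range (m - m/2), ((m - m/2) - 1 - k) from
      Finset.sum_congr rfl (fun k hk => by simp only [Finset.mem_range] at hk; omega)]
    exact Finset.sum_range_reflect (fun i => i) (m - m/2)
  rw [ha, hb]
  obtain ⟨h, hh⟩ : ∃ h, m = 2*h ∨ m = 2*h+1 := ⟨m/2, by omega⟩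
  have g4 : h ≤ h*h := by nlinarith
  rcases hh with rfl | rfl
  · have e1 : 2*h/2 = h := by omega
    have e2 : 2*h - h = h := by omega
    rw [e1, e2]
    have g : (∑ k ∈ Finset.range h, k) * 2 = h * (h-1) := Finset.sum_range_id_mul_two h
    have g2 : h * (h-1) = h*h - h := by rw [Nat.mul_sub, mul_one]
    have g3 : 2*h*(2*h) = 4*(h*h) := by ring
    rw [g2] at g
    rw [g3]
    generalize h*h = A at g g4 ⊢
    omega
  · have e1 : (2*h+1)/2 = h := by omega
    have e2 : 2*h+1 - h = h+1 := by omega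
    rw [e1, e2]
    have g : (∑ k ∈ Finset.range h, k) * 2 = h * (h-1) := Finset.sum_range_id_mul_two h
    have g' : (∑ k ∈ Finset.range (h+1), k) * 2 = (h+1) * h := by
      simpa using Finset.sum_range_id_mul_two (h+1)
    have g2 : h * (h-1) = h*h - h := by rw [Nat.mul_sub, mul_one]
    have g2' : (h+1) * h = h*h + h := by ring
    have g3 : (2*h+1)*(2*h+1) = 4*(h*h) + 4*h + 1 := by ring
    rw [g2] at g; rw [g2'] at g'
    rw [g3]
    generalize h*h = A at g g' g4 ⊢
    omega

/-- Closed form: `2·D(i)^n = (i² - i mod 2) + ((n-i)² - (n-i) mod 2)` for `1 ≤ i ≤ n/2`. -/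
lemma key (n i : ℕ) (hi1 : 1 ≤ i) (hi2 : 2 * i ≤ n) :
    2 * Di n i = (i * i - i % 2) + ((n - i) * (n - i) - (n - i) % 2) := by
  have hin : i ≤ n - 1 := by omega
  unfold Di
  have e0 : Finset.Icc 1 (n-1) = Finset.Ioc 0 (n-1) := Finset.Icc_add_one_left_eq_Ioc 0 (n-1)
  rw [e0, ← Finset.sum_Ioc_consecutive _ (Nat.zero_le i) hin]
  have e1 : Finset.Ioc 0 i = Finset.Ico 1 (i+1) := by
    rw [← Finset.Icc_add_one_left_eq_Ioc, ← Finset.Ico_add_one_right_eq_Icc, zero_add]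
  have e2 : Finset.Ioc i (n-1) = Finset.Ico (i+1) n := by
    rw [← Finset.Icc_add_one_left_eq_Ioc, ← Finset.Ico_add_one_right_eq_Icc]
    congr 1; omega
  rw [e1, e2, Finset.sum_Ico_eq_sum_range, Finset.sum_Ico_eq_sum_range]
  have p1 : ∑ k ∈ Finset.range (i+1-1), Dc n i (1+k)
      = ∑ k ∈ Finset.range i, 2 * min (1+k) (i-1-k) := by
    apply Finset.sum_congr rfl
    intro k hk; simp only [Finset.mem_range] at hk
    unfold Dc; omega
  have p2 : ∑ k ∈ Finset.range (n-(i+1)), Dc n i (i+1+k)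
      = ∑ k ∈ Finset.range ((n-i)-1), 2 * min (1+k) ((n-i)-1-k) := by
    apply Finset.sum_congr rfl
    intro k hk; simp only [Finset.mem_range] at hk
    unfold Dc; omega
  rw [p1, p2, ← Finset.mul_sum, ← Finset.mul_sum]
  have p3 : ∀ b : ℕ, 1 ≤ b → ∑ k ∈ Finset.range (b-1), min (1+k) (b-1-k)
      = ∑ k ∈ Finset.range b, min (1+k) (b-1-k) := by
    rintro (_|t) hb
    · omega
    · rw [Finset.sum_range_succ, show t+1-1 = t from rfl]
      have : min (1+t) (t-t) = 0 := by omega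
      omega
  rw [p3 (n-i) (by omega)]
  have s1 := sumMin i
  have s2 := sumMin (n-i)
  omega

theorem stmt10 (n i : ℕ) (hn : 2 ≤ n) (hodd : Odd n) (hi1 : 1 ≤ i) (hi2 : i < n / 2) :
    Di n (i + 1) + (n - (2 * i + 1)) = Di n i ∧ Di n (i + 1) < Di n i := by
  have hn2 : n % 2 = 1 := Nat.odd_iff.mp hodd
  have h1 := key n i hi1 (by omega)
  have h2 := key n (i+1) (by omega) (by omega)
  have hc : n - (i+1) = (n - i - 1) := by omega
  have hb : n - i = (n - i - 1) + 1 := by omega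
  rw [hc] at h2
  rw [hb] at h1
  have e1 : (i+1)*(i+1) = i*i + 2*i + 1 := by ring
  have e2 : ((n-i-1)+1)*((n-i-1)+1) = (n-i-1)*(n-i-1) + 2*(n-i-1) + 1 := by ring
  rw [e1] at h2
  rw [e2] at h1
  have gP : i ≤ i*i := by nlinarith
  have gQ : (n-i-1) ≤ (n-i-1)*(n-i-1) := by nlinarith
  generalize i*i = P at h1 h2 gP
  generalize (n-i-1)*(n-i-1) = Q at h1 h2 gQ
  omega
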